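/- arXiv:0905.3583 — 5 statements merged into one kernel-verified Lean document; each statement's English description precedes it below -/
import Mathlib

section
/- Let d ≥ 1 be a real number, C > 0, and define φ(η) = η^{1-1/d} + C·(1-η)^2 - C for η ∈ [0,1], so that φ(η) = η·(η^{-1/d} + C·η - 2C) for η > 0. Let C⋆ = (1/d)·((d+1)/2)^{(d+1)/d}. Then φ(η) < 0 for some η ∈ (0,1] if and only if C > C⋆. -/
/-- Weighted AM-GM: for `r > 0` and `d ≥ 1`, `d + 1 ≤ d * r^(-1/d) + r`. -/
lemma amgm_aux (d : ℝ) (hd : 1 ≤ d) {r : ℝ} (hr : 0 < r) :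
    d + 1 ≤ d * r ^ (-(1 / d)) + r := by
  have hd0 : (0 : ℝ) < d := by linarith
  have hd1 : (0 : ℝ) < d + 1 := by linarith
  have hX : (0 : ℝ) ≤ r ^ (-(1 / d)) := (Real.rpow_pos_of_pos hr _).le
  have h := Real.geom_mean_le_arith_mean2_weighted
    (div_pos hd0 hd1).le (div_pos one_pos hd1).le hX hr.le
    (by field_simp <;> ring)
  -- LHS of h is (r^(-(1/d)))^(d/(d+1)) * r^(1/(d+1)) = r^0 = 1
  have hL : (r ^ (-(1 / d))) ^ (d / (d + 1)) * r ^ (1 / (d + 1)) = 1 := by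
    rw [← Real.rpow_mul hr.le, ← Real.rpow_add hr]
    have : -(1 / d) * (d / (d + 1)) + 1 / (d + 1) = 0 := by field_simp <;> ring
    rw [this, Real.rpow_zero]
  rw [hL] at h
  have h2 := mul_le_mul_of_nonneg_left h hd1.le
  have hne : d + 1 ≠ 0 := hd1.ne'
  calc d + 1 = (d + 1) * 1 := by ring
    _ ≤ (d + 1) * (d / (d + 1) * r ^ (-(1 / d)) + 1 / (d + 1) * r) := h2
    _ = d * r ^ (-(1 / d)) + r := by field_simp

/-- Key equivalence: `(d+1) u^(1/(d+1)) < 2u ↔ ((d+1)/2)^((d+1)/d) < u`. -/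
lemma key_aux (d u : ℝ) (hd : 1 ≤ d) (hu : 0 < u) :
    (d + 1) * u ^ ((1 : ℝ) / (d + 1)) < 2 * u ↔
      ((d + 1) / 2) ^ ((d + 1) / d) < u := by
  have hd0 : (0 : ℝ) < d := by linarith
  have hd1 : (0 : ℝ) < d + 1 := by linarith
  set v := u ^ ((1 : ℝ) / (d + 1)) with hv_def
  have hv : 0 < v := Real.rpow_pos_of_pos hu _
  have hvd1 : v ^ (d + 1) = u := by
    rw [hv_def, ← Real.rpow_mul hu.le]
    have : 1 / (d + 1) * (d + 1) = 1 := by field_simp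
    rw [this, Real.rpow_one]
  have huv : v ^ d * v = u := by
    calc v ^ d * v = v ^ d * v ^ (1 : ℝ) := by rw [Real.rpow_one]
      _ = v ^ (d + 1) := (Real.rpow_add hv d 1).symm
      _ = u := hvd1
  have huv2 : (v ^ d) ^ ((d + 1) / d) = u := by
    rw [← Real.rpow_mul hv.le]
    have : d * ((d + 1) / d) = d + 1 := by field_simp
    rw [this, hvd1]
  have hiff1 : (d + 1) * v < 2 * u ↔ d + 1 < 2 * v ^ d := by
    rw [← huv, show 2 * (v ^ d * v) = 2 * v ^ d * v by ring, mul_lt_mul_iff_of_pos_right hv]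
  have hiff2 : ((d + 1) / 2) ^ ((d + 1) / d) < u ↔ (d + 1) / 2 < v ^ d := by
    rw [← huv2]
    exact Real.rpow_lt_rpow_iff (by positivity) (Real.rpow_pos_of_pos hv d).le
      (by positivity)
  rw [hiff1, hiff2]
  constructor <;> intro h <;> linarith

/-- Droplet formation criterion: with `φ(η) = η^{1-1/d} + C(1-η)² - C`,
`φ` is negative somewhere on `(0,1]` iff `C > C⋆ = (1/d)((d+1)/2)^{(d+1)/d}`. -/
theorem stmt1 (d C : ℝ) (hd : 1 ≤ d) (hC : 0 < C) :
    (∃ η ∈ Set.Ioc (0 : ℝ) 1,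
        η ^ ((1 : ℝ) - 1 / d) + C * (1 - η) ^ 2 - C < 0) ↔
      C > (1 / d) * ((d + 1) / 2) ^ ((d + 1) / d) := by
  have hd0 : (0 : ℝ) < d := by linarith
  have hd1 : (0 : ℝ) < d + 1 := by linarith
  set u : ℝ := C * d with hu_def
  have hu : 0 < u := mul_pos hC hd0
  set t : ℝ := u ^ ((1 : ℝ) / (d + 1)) with ht_def
  have ht : 0 < t := Real.rpow_pos_of_pos hu _
  set A : ℝ := ((d + 1) / 2) ^ ((d + 1) / d) with hA_def
  have hA1 : (1 : ℝ) ≤ A := by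
    rw [hA_def]
    apply Real.one_le_rpow (by linarith) (by positivity)
  constructor
  · -- existence of negative φ implies C > C⋆
    rintro ⟨η, ⟨hη, hη1⟩, hneg⟩
    set X : ℝ := η ^ (-(1 / d)) with hX_def
    have hXpos : 0 < X := Real.rpow_pos_of_pos hη _
    have hexp : η ^ ((1 : ℝ) - 1 / d) = η * X := by
      rw [hX_def, sub_eq_add_neg, Real.rpow_add hη, Real.rpow_one]
    rw [hexp] at hneg
    -- ψ(η) = X + Cη - 2C < 0
    have hψ : X + C * η - 2 * C < 0 := by nlinarith [mul_pos hη hXpos]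
    -- set w = u^(d/(d+1)), so w * t = u
    set w : ℝ := u ^ (d / (d + 1)) with hw_def
    have hwpos : 0 < w := Real.rpow_pos_of_pos hu _
    have hwt : w * t = u := by
      rw [hw_def, ht_def, ← Real.rpow_add hu]
      have : d / (d + 1) + 1 / (d + 1) = 1 := by field_simp
      rw [this, Real.rpow_one]
    -- r = η * w
    have hr : 0 < η * w := mul_pos hη hwpos
    have hrinv : (η * w) ^ (-(1 / d)) = X * t⁻¹ := by
      rw [Real.mul_rpow hη.le hwpos.le, hX_def, hw_def, ← Real.rpow_mul hu.le]
      have : d / (d + 1) * -(1 / d) = -(1 / (d + 1)) := by field_simp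
      rw [this, Real.rpow_neg hu.le, ← ht_def]
    have hamgm := amgm_aux d hd hr
    rw [hrinv] at hamgm
    have h6 : (d + 1) * t ≤ d * X + η * u := by
      have h7 := mul_le_mul_of_nonneg_right hamgm ht.le
      have hrhs : (d * (X * t⁻¹) + η * w) * t = d * X + η * u := by
        rw [← hwt]
        field_simp <;> ring
      linarith [hrhs ▸ h7]
    have h8 : d * X + η * u < 2 * u := by
      have := mul_lt_mul_of_pos_left hψ hd0
      nlinarith
    have hkey := (key_aux d u hd hu).mp (by rw [← ht_def]; linarith)
    rw [gt_iff_lt, one_div_mul_eq_div, div_lt_iff₀ hd0]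
    linarith [hkey, hu_def]
  · -- C > C⋆ implies existence
    intro hCgt
    have hAu : A < u := by
      rw [gt_iff_lt, one_div_mul_eq_div, div_lt_iff₀ hd0] at hCgt
      linarith [hCgt]
    have hkey : (d + 1) * t < 2 * u := by
      rw [ht_def]
      exact (key_aux d u hd hu).mpr (by rw [← hA_def]; exact hAu)
    have hu1 : (1 : ℝ) ≤ u := le_trans hA1 hAu.le
    -- candidate η₀ = u^(-(d/(d+1)))
    set η₀ : ℝ := u ^ (-(d / (d + 1))) with hη₀_def
    have hη₀pos : 0 < η₀ := Real.rpow_pos_of_pos hu _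
    have hη₀le1 : η₀ ≤ 1 := by
      rw [hη₀_def]
      exact Real.rpow_le_one_of_one_le_of_nonpos hu1
        (neg_nonpos.mpr (div_pos hd0 hd1).le)
    have hη₀inv : η₀ ^ (-(1 / d)) = t := by
      have h1 : (u ^ (-(d / (d + 1)))) ^ (-(1 / d)) = u ^ (-(d / (d + 1)) * -(1 / d)) :=
        (Real.rpow_mul hu.le _ _).symm
      have h2 : -(d / (d + 1)) * -(1 / d) = 1 / (d + 1) := by field_simp <;> ring
      rw [hη₀_def, h1, h2, ht_def]
    have hη₀u : η₀ * u = t := by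
      have h1 : u ^ (-(d / (d + 1))) * u ^ (1 : ℝ) = u ^ (-(d / (d + 1)) + 1) :=
        (Real.rpow_add hu _ _).symm
      have h2 : -(d / (d + 1)) + 1 = 1 / (d + 1) := by field_simp; ring
      have h3 : η₀ * u = u ^ (-(d / (d + 1))) * u ^ (1 : ℝ) := by
        rw [Real.rpow_one, hη₀_def]
      rw [h3, h1, h2, ht_def]
    have hCη₀ : C * η₀ = t / d := by
      rw [eq_div_iff hd0.ne']
      calc C * η₀ * d = η₀ * (C * d) := by ring
        _ = η₀ * u := by rw [hu_def]
        _ = t := hη₀u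
    refine ⟨η₀, ⟨hη₀pos, hη₀le1⟩, ?_⟩
    have hexp : η₀ ^ ((1 : ℝ) - 1 / d) = η₀ * t := by
      rw [sub_eq_add_neg, Real.rpow_add hη₀pos, Real.rpow_one, hη₀inv]
    rw [hexp]
    have hη₀lt : (d + 1) * η₀ < 2 := by
      nlinarith [hη₀u, hkey, hu]
    have expand : η₀ * t + C * (1 - η₀) ^ 2 - C = t / d * ((d + 1) * η₀ - 2) := by
      have h := hCη₀
      field_simp at h ⊢
      nlinarith [h]
    rw [expand]
    exact mul_neg_of_pos_of_neg (div_pos ht hd0) (by linarith)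
end

section
/- Let d ≥ 2 be an integer, C > C⋆ = (1/d)·((d+1)/2)^{(d+1)/d}, and define Φ(η) = η^{1-1/d} + C·(1-η)^2 for η ∈ [0,1]. Then any global minimizer η_c of Φ on [0,1] satisfies η_c ≥ 2/(d+1). -/
set_option maxHeartbeats 1000000


/-- For `C > C⋆`, any global minimizer of `Φ(η) = η^{1-1/d} + C(1-η)²` over `[0,1]`
satisfies `η_c ≥ 2/(d+1)`. -/
theorem stmt3 (d : ℕ) (hd : 2 ≤ d) (C : ℝ)
    (hC : C > (1 / (d : ℝ)) * (((d : ℝ) + 1) / 2) ^ (((d : ℝ) + 1) / d))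
    (ηc : ℝ) (hηc : ηc ∈ Set.Icc (0 : ℝ) 1)
    (hmin : ∀ η ∈ Set.Icc (0 : ℝ) 1,
      ηc ^ ((1 : ℝ) - 1 / d) + C * (1 - ηc) ^ 2 ≤ η ^ ((1 : ℝ) - 1 / d) + C * (1 - η) ^ 2) :
    ηc ≥ 2 / ((d : ℝ) + 1) := by
  set D : ℝ := (d : ℝ) with hD
  have hD2 : (2:ℝ) ≤ D := by rw [hD]; exact_mod_cast hd
  have hDpos : (0:ℝ) < D := by linarith
  set α : ℝ := 1 - 1/D with hαdef
  have hα : (0:ℝ) < α := by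
    have : 1/D ≤ 1/2 := by
      apply div_le_div_of_nonneg_left <;> linarith
    simp only [hαdef]; linarith
  have hbase : (0:ℝ) < (D+1)/2 := by linarith
  set T : ℝ := ((D+1)/2) ^ ((1:ℝ)/D) with hTdef
  have hT : 0 < T := Real.rpow_pos_of_pos hbase _
  -- rewrite the critical constant
  have hCstar : (1 / D) * ((D + 1) / 2) ^ ((D + 1) / D) = ((D+1)/(2*D)) * T := by
    have h1 : (D+1)/D = 1 + 1/D := by field_simp
    rw [h1, Real.rpow_add hbase, Real.rpow_one, hTdef]
    ring
  have hC' : ((D+1)/(2*D)) * T < C := by rw [← hCstar]; exact hC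
  have hCpos : 0 < C := lt_trans (by positivity) hC'
  have hC2 : T < C * (2*D/(D+1)) := by
    have h1 : 0 < 2*D/(D+1) := by positivity
    have := mul_lt_mul_of_pos_right hC' h1
    calc T = ((D+1)/(2*D)) * T * (2*D/(D+1)) := by field_simp
      _ < C * (2*D/(D+1)) := this
  -- the trial point η0 = 2/(D+1)
  set η0 : ℝ := 2/(D+1) with hη0def
  have hη0pos : 0 < η0 := by positivity
  have hη0le : η0 ≤ 1 := by
    rw [hη0def, div_le_one (by linarith)]; linarith
  have hη0rpow : η0 ^ α = η0 * T := by
    have hTeq : T = η0 ^ (-(1/D)) := by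
      rw [Real.rpow_neg hη0pos.le, hTdef, ← Real.inv_rpow hη0pos.le]
      congr 1
      rw [hη0def]
      field_simp
    calc η0 ^ α = η0 ^ ((1:ℝ) + (-(1/D))) := by rw [hαdef]; ring_nf
      _ = η0 ^ (1:ℝ) * η0 ^ (-(1/D)) := Real.rpow_add hη0pos _ _
      _ = η0 * T := by rw [Real.rpow_one, hTeq]
  have hΦη0 : η0 ^ α + C * (1 - η0) ^ 2 < C := by
    rw [hη0rpow]
    have key : η0 * T < C * η0 * (2 - η0) := by
      have h2 : 2 - η0 = 2*D/(D+1) := by rw [hη0def]; field_simp; ring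
      rw [h2]
      calc η0 * T < η0 * (C * (2*D/(D+1))) := by
            exact mul_lt_mul_of_pos_left hC2 hη0pos
        _ = C * η0 * (2*D/(D+1)) := by ring
    nlinarith [key]
  rcases eq_or_lt_of_le hηc.1 with h0 | h0
  · -- ηc = 0 is impossible
    exfalso
    have hm := hmin η0 ⟨hη0pos.le, hη0le⟩
    rw [← h0] at hm
    rw [Real.zero_rpow (by simpa [hαdef] using ne_of_gt hα)] at hm
    simp only [hαdef] at hΦη0
    nlinarith [hm, hΦη0]
  rcases eq_or_lt_of_le hηc.2 with h1 | h1
  · rw [h1, ge_iff_le, div_le_one (by linarith)]; linarith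
  -- interior case: ηc ∈ (0,1)
  have hloc : IsLocalMin (fun η : ℝ => η ^ α + C * (1 - η) ^ 2) ηc := by
    have hmem : Set.Icc (0:ℝ) 1 ∈ nhds ηc := Icc_mem_nhds h0 h1
    filter_upwards [hmem] with η hη
    exact hmin η hη
  have hd1 : HasDerivAt (fun η : ℝ => η ^ α) (α * ηc ^ (α - 1)) ηc :=
    Real.hasDerivAt_rpow_const (Or.inl (ne_of_gt h0))
  have hd2 : HasDerivAt (fun η : ℝ => C * (1 - η) ^ 2) (C * (2 * (1 - ηc) * (-1))) ηc := by
    have hsub : HasDerivAt (fun η : ℝ => 1 - η) (-1) ηc := by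
      simpa using (hasDerivAt_id ηc).const_sub 1
    have : HasDerivAt (fun η : ℝ => C * (1 - η) ^ 2) (C * ((2:ℕ) * (1 - ηc) ^ (2 - 1) * (-1))) ηc :=
      (hsub.pow 2).const_mul C
    convert this using 1
    simp
  have hderiv := hloc.hasDerivAt_eq_zero (hd1.add hd2)
  set P : ℝ := ηc ^ (α - 1) with hPdef
  have hPpos : 0 < P := Real.rpow_pos_of_pos h0 _
  have hcrit : α * P = 2 * C * (1 - ηc) := by nlinarith [hderiv]
  -- compare with η = 0
  have hm0 := hmin 0 ⟨le_refl 0, zero_le_one⟩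
  rw [Real.zero_rpow (by simpa [hαdef] using ne_of_gt hα)] at hm0
  have hrpow : ηc ^ α = P * ηc := by
    rw [hPdef]
    calc ηc ^ α = ηc ^ ((α - 1) + 1) := by ring_nf
      _ = ηc ^ (α - 1) * ηc ^ (1:ℝ) := Real.rpow_add h0 _ _
      _ = ηc ^ (α - 1) * ηc := by rw [Real.rpow_one]
  simp only [hαdef] at hm0 hrpow
  rw [hrpow] at hm0
  -- P * ηc ≤ C * ηc * (2 - ηc)
  have hPle : P ≤ C * (2 - ηc) := by
    have h2 : P * ηc ≤ C * ηc * (2 - ηc) := by nlinarith [hm0]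
    nlinarith [h2, h0]
  -- combine: 2C(1-ηc) = αP ≤ αC(2-ηc)
  have hfin : 2 * C * (1 - ηc) ≤ α * (C * (2 - ηc)) := by
    rw [← hcrit]
    exact mul_le_mul_of_nonneg_left hPle hα.le
  -- divide by C and solve
  have h2 : 2 * (1 - ηc) ≤ α * (2 - ηc) := by
    nlinarith [hfin, hCpos]
  rw [ge_iff_le, div_le_iff₀ (by linarith : (0:ℝ) < D + 1)]
  simp only [hαdef] at h2
  have hDne : D ≠ 0 := ne_of_gt hDpos
  have h3 : 2 * (1 - ηc) * D ≤ (D - 1) * (2 - ηc) := by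
    have : (1 - 1/D) * (2 - ηc) * D = (D - 1) * (2 - ηc) := by field_simp
    nlinarith [h2, hDpos]
  nlinarith [h3]
end

section
/- Let β > 1 and let s(m) = −((1−m)/2)·log((1−m)/2) − ((1+m)/2)·log((1+m)/2) for m ∈ (−1,1). Then the equation m = tanh(β m) has exactly three solutions in (−1,1), namely 0, m_β, and −m_β with m_β > 0, and the function m ↦ −s(m)/β − m²/2 on (−1,1) attains its global minimum exactly at m = ±m_β. -/
open Real Set

/-- Lattice-gas entropy. -/
noncomputable def latticeEntropy (m : ℝ) : ℝ :=
  -((1 - m) / 2) * Real.log ((1 - m) / 2) - ((1 + m) / 2) * Real.log ((1 + m) / 2)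

noncomputable def myA (m : ℝ) : ℝ := Real.log ((1 + m) / (1 - m)) / 2

lemma tanh_exp (y : ℝ) :
    Real.tanh y = (Real.exp (2 * y) - 1) / (Real.exp (2 * y) + 1) := by
  rw [Real.tanh_eq_sinh_div_cosh, Real.sinh_eq, Real.cosh_eq]
  have h1 : Real.exp y ≠ 0 := (Real.exp_pos y).ne'
  have h3 : Real.exp (2 * y) + 1 > 0 := by positivity
  have he : Real.exp (2 * y) = Real.exp y * Real.exp y := by
    rw [two_mul, Real.exp_add]
  have hn : Real.exp (-y) = (Real.exp y)⁻¹ := Real.exp_neg y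
  rw [he, hn]
  field_simp

lemma tanh_mem_Ioo (y : ℝ) : Real.tanh y ∈ Ioo (-1 : ℝ) 1 := by
  rw [tanh_exp]
  have hE : (0:ℝ) < Real.exp (2 * y) := Real.exp_pos _
  have h3 : (0:ℝ) < Real.exp (2 * y) + 1 := by positivity
  constructor
  · rw [lt_div_iff₀ h3]; linarith
  · rw [div_lt_one h3]; linarith

lemma myA_tanh (y : ℝ) : myA (Real.tanh y) = y := by
  have hE : (0:ℝ) < Real.exp (2 * y) := Real.exp_pos _
  have h3 : Real.exp (2 * y) + 1 ≠ 0 := by positivity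
  have key : (1 + Real.tanh y) / (1 - Real.tanh y) = Real.exp (2 * y) := by
    rw [tanh_exp]
    field_simp
    ring
  rw [myA, key, Real.log_exp]; ring

lemma tanh_myA {m : ℝ} (hm : m ∈ Ioo (-1 : ℝ) 1) : Real.tanh (myA m) = m := by
  obtain ⟨h1, h2⟩ := hm
  have hp : (0:ℝ) < 1 + m := by linarith
  have hq : (0:ℝ) < 1 - m := by linarith
  have hE : Real.exp (2 * myA m) = (1 + m) / (1 - m) := by
    rw [myA, show 2 * (Real.log ((1 + m) / (1 - m)) / 2) = Real.log ((1 + m) / (1 - m)) by ring]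
    exact Real.exp_log (by positivity)
  rw [tanh_exp, hE]
  field_simp
  ring

lemma myA_neg {m : ℝ} (hm : m ∈ Ioo (-1 : ℝ) 1) : myA (-m) = -myA m := by
  obtain ⟨h1, h2⟩ := hm
  have hp : (0:ℝ) < 1 + m := by linarith
  have hq : (0:ℝ) < 1 - m := by linarith
  rw [myA, myA, show (1 + -m) / (1 - -m) = ((1 + m) / (1 - m))⁻¹ by rw [inv_div]; ring_nf,
    Real.log_inv]
  ring

lemma latticeEntropy_even (m : ℝ) : latticeEntropy (-m) = latticeEntropy m := by
  unfold latticeEntropy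
  rw [show (1 : ℝ) - -m = 1 + m by ring, show (1 : ℝ) + -m = 1 - m by ring]
  ring

lemma hasDerivAt_myA {m : ℝ} (hm : m ∈ Ioo (-1 : ℝ) 1) :
    HasDerivAt myA (1 / (1 - m ^ 2)) m := by
  obtain ⟨h1, h2⟩ := hm
  have hp : (0:ℝ) < 1 + m := by linarith
  have hq : (0:ℝ) < 1 - m := by linarith
  have hu : HasDerivAt (fun x : ℝ => (1 + x) / (1 - x))
      ((1 * (1 - m) - (1 + m) * (-1)) / (1 - m) ^ 2) m :=
    ((hasDerivAt_id m).const_add 1).div ((hasDerivAt_id m).const_sub 1) hq.ne'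
  have hl := (Real.hasDerivAt_log (by positivity : (1 + m) / (1 - m) ≠ 0)).comp m hu
  have h := hl.div_const 2
  refine h.congr_deriv ?_
  have hsq : (1 - m ^ 2 : ℝ) ≠ 0 := by nlinarith
  field_simp
  ring

lemma hasDerivAt_F (β : ℝ) (hβ : (0:ℝ) < β) {m : ℝ} (hm : m ∈ Ioo (-1 : ℝ) 1) :
    HasDerivAt (fun x => -(latticeEntropy x) / β - x ^ 2 / 2)
      ((myA m - β * m) / β) m := by
  obtain ⟨h1, h2⟩ := hm
  have hp : (0:ℝ) < 1 + m := by linarith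
  have hq : (0:ℝ) < 1 - m := by linarith
  have hu : HasDerivAt (fun x : ℝ => (1 - x) / 2) (-(1/2)) m := by
    have : (-(1:ℝ)/2) = -(1/2) := by norm_num
    rw [← this]
    simpa using ((hasDerivAt_id m).const_sub 1).div_const 2
  have hv : HasDerivAt (fun x : ℝ => (1 + x) / 2) (1/2) m := by
    simpa using ((hasDerivAt_id m).const_add 1).div_const 2
  have hlu : HasDerivAt (fun x : ℝ => Real.log ((1 - x) / 2))
      (((1 - m)/2)⁻¹ * (-(1/2))) m :=
    (Real.hasDerivAt_log (by positivity)).comp m hu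
  have hlv : HasDerivAt (fun x : ℝ => Real.log ((1 + x) / 2))
      (((1 + m)/2)⁻¹ * (1/2)) m :=
    (Real.hasDerivAt_log (by positivity)).comp m hv
  have h₁ := hu.mul hlu
  have h₂ := hv.mul hlv
  have hsq : HasDerivAt (fun x : ℝ => x ^ 2 / 2) m m := by
    simpa using (hasDerivAt_pow 2 m).div_const 2
  have hs : HasDerivAt latticeEntropy
      (-(-(1/2) * Real.log ((1 - m)/2) + (1 - m)/2 * (((1 - m)/2)⁻¹ * (-(1/2))))
        - (1/2 * Real.log ((1 + m)/2) + (1 + m)/2 * (((1 + m)/2)⁻¹ * (1/2)))) m := by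
    have := h₁.neg.sub h₂
    refine this.congr_of_eventuallyEq (Filter.Eventually.of_forall fun x => ?_)
    simp only [Pi.mul_apply, Pi.neg_apply, Pi.sub_apply]
    unfold latticeEntropy; ring
  have hF := (hs.neg.div_const β).sub hsq
  refine hF.congr_deriv ?_
  have e1 : Real.log ((1 + m)/(1 - m)) = Real.log ((1 + m)/2) - Real.log ((1 - m)/2) := by
    rw [← Real.log_div (by positivity) (by positivity)]
    congr 1
    field_simp
  rw [myA, e1]
  have hne1 : ((1 - m)/2 : ℝ) ≠ 0 := by positivity
  have hne2 : ((1 + m)/2 : ℝ) ≠ 0 := by positivity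
  field_simp
  ring

/-- For `β > 1`, `m = tanh(βm)` has exactly three solutions `0, ±m_β` in `(−1,1)`,
and `m ↦ −s(m)/β − m²/2` attains its global minimum on `(−1,1)` exactly at `±m_β`. -/
theorem stmt5 (β : ℝ) (hβ : 1 < β) :
    ∃ mβ : ℝ, 0 < mβ ∧ mβ < 1 ∧
      {m ∈ Set.Ioo (-1 : ℝ) 1 | m = Real.tanh (β * m)} = {0, mβ, -mβ} ∧
      (∀ m ∈ Set.Ioo (-1 : ℝ) 1,
        -(latticeEntropy mβ) / β - mβ ^ 2 / 2 ≤ -(latticeEntropy m) / β - m ^ 2 / 2) ∧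
      (∀ m ∈ Set.Ioo (-1 : ℝ) 1,
        -(latticeEntropy m) / β - m ^ 2 / 2 = -(latticeEntropy mβ) / β - mβ ^ 2 / 2 →
          m = mβ ∨ m = -mβ) := by
  have hβ0 : (0:ℝ) < β := by linarith
  set g : ℝ → ℝ := fun x => myA x - β * x with hg_def
  -- derivative of g
  have hg : ∀ m ∈ Ioo (-1 : ℝ) 1, HasDerivAt g (1 / (1 - m ^ 2) - β) m := by
    intro m hm
    have h2 : HasDerivAt (fun x : ℝ => β * x) β m := by
      simpa using (hasDerivAt_id m).const_mul β
    exact (hasDerivAt_myA hm).sub h2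
  have hg0 : g 0 = 0 := by simp [hg_def, myA]
  -- the critical point c
  set c : ℝ := Real.sqrt ((β - 1) / β) with hc_def
  have hc0 : 0 < c := Real.sqrt_pos.2 (div_pos (by linarith) hβ0)
  have hc2 : c ^ 2 = (β - 1) / β := Real.sq_sqrt (div_pos (by linarith) hβ0).le
  have hc1 : c < 1 := by
    nlinarith [hc2, hc0, div_lt_one hβ0 |>.2 (by linarith : β - 1 < β)]
  -- monotonicity of g
  have hIccsub : Icc (0:ℝ) c ⊆ Ioo (-1:ℝ) 1 := fun x hx => ⟨by linarith [hx.1], by linarith [hx.2]⟩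
  have hIcosub : Ico c (1:ℝ) ⊆ Ioo (-1:ℝ) 1 := fun x hx => ⟨by linarith [hx.1], hx.2⟩
  have hganti : StrictAntiOn g (Icc 0 c) := by
    apply strictAntiOn_of_deriv_neg (convex_Icc _ _)
    · exact fun x hx => (hg x (hIccsub hx)).continuousAt.continuousWithinAt
    · intro x hx
      rw [interior_Icc] at hx
      rw [(hg x (hIccsub ⟨hx.1.le, hx.2.le⟩)).deriv]
      have hx2 : x ^ 2 < (β - 1) / β := by
        rw [← hc2]; nlinarith [hx.1, hx.2]
      have hq : (0:ℝ) < 1 - x ^ 2 := by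
        have := (div_lt_one hβ0).2 (by linarith : β - 1 < β)
        nlinarith
      rw [sub_neg, div_lt_iff₀ hq]
      have h5 : β * x ^ 2 < β * ((β - 1) / β) := mul_lt_mul_of_pos_left hx2 hβ0
      have h6 : β * ((β - 1) / β) = β - 1 := by field_simp
      nlinarith
  have hgmono : StrictMonoOn g (Ico c 1) := by
    apply strictMonoOn_of_deriv_pos (convex_Ico _ _)
    · exact fun x hx => (hg x (hIcosub hx)).continuousAt.continuousWithinAt
    · intro x hx
      rw [interior_Ico] at hx
      rw [(hg x (hIcosub ⟨hx.1.le, hx.2⟩)).deriv]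
      have hx2 : (β - 1) / β < x ^ 2 := by
        rw [← hc2]; nlinarith [hx.1, hc0, hx.2]
      have hq : (0:ℝ) < 1 - x ^ 2 := by nlinarith [hx.2, hx.1, hc0]
      rw [sub_pos, lt_div_iff₀ hq]
      have h5 : β * ((β - 1) / β) < β * x ^ 2 := mul_lt_mul_of_pos_left hx2 hβ0
      have h6 : β * ((β - 1) / β) = β - 1 := by field_simp
      nlinarith
  -- the point b where g > 0
  set b : ℝ := Real.tanh (β + 1) with hb_def
  have hbI := tanh_mem_Ioo (β + 1)
  have hAb : myA b = β + 1 := myA_tanh _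
  have hb_pos : 0 < b := by
    rw [hb_def, tanh_exp]
    have h1 : (1:ℝ) < Real.exp (2 * (β + 1)) := by
      have := Real.add_one_le_exp (2 * (β + 1))
      linarith
    apply div_pos (by linarith) (by linarith)
  have hgb : 0 < g b := by
    have : β * b < β := by nlinarith [hbI.2]
    simp only [hg_def, hAb]
    linarith
  have hgc : g c < 0 := by
    have := hganti (left_mem_Icc.2 hc0.le) (right_mem_Icc.2 hc0.le) hc0
    rwa [hg0] at this
  have hcb : c < b := by
    by_contra h
    push_neg at h
    have := hganti (left_mem_Icc.2 hc0.le) ⟨hb_pos.le, h⟩ hb_pos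
    rw [hg0] at this
    linarith
  -- existence of mβ by IVT
  have hcont : ContinuousOn g (Icc c b) := fun x hx =>
    (hg x ⟨by linarith [hx.1], by linarith [hx.2, hbI.2]⟩).continuousAt.continuousWithinAt
  obtain ⟨mβ, hmβ_mem, hgmβ⟩ := intermediate_value_Ioo hcb.le hcont ⟨hgc, hgb⟩
  have hmβ0 : 0 < mβ := lt_trans hc0 hmβ_mem.1
  have hmβ1 : mβ < 1 := lt_trans hmβ_mem.2 hbI.2
  have hmβc : c < mβ := hmβ_mem.1
  -- uniqueness of positive zero
  have huniq : ∀ x ∈ Ioo (0:ℝ) 1, g x = 0 → x = mβ := by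
    intro x hx hgx
    rcases le_or_gt x c with h | h
    · exfalso
      have := hganti (left_mem_Icc.2 hc0.le) ⟨hx.1.le, h⟩ hx.1
      rw [hg0, hgx] at this
      exact lt_irrefl 0 this
    · exact hgmono.injOn ⟨h.le, hx.2⟩ ⟨hmβc.le, hmβ1⟩ (by rw [hgx, hgmβ])
  -- sign of g on (0, mβ) and (mβ, 1)
  have hsgn_neg : ∀ x ∈ Ioo (0:ℝ) mβ, g x < 0 := by
    intro x hx
    rcases le_or_gt x c with h | h
    · have := hganti (left_mem_Icc.2 hc0.le) ⟨hx.1.le, h⟩ hx.1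
      rwa [hg0] at this
    · have := hgmono ⟨h.le, lt_trans hx.2 hmβ1⟩ ⟨hmβc.le, hmβ1⟩ hx.2
      rwa [hgmβ] at this
  have hsgn_pos : ∀ x ∈ Ioo mβ (1:ℝ), 0 < g x := by
    intro x hx
    have := hgmono ⟨hmβc.le, hmβ1⟩ ⟨(lt_trans hmβc hx.1).le, hx.2⟩ hx.1
    rwa [hgmβ] at this
  have hmβIoo : mβ ∈ Ioo (-1:ℝ) 1 := ⟨by linarith, hmβ1⟩
  have hnegIoo : -mβ ∈ Ioo (-1:ℝ) 1 := ⟨by linarith, by linarith⟩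
  have hAmβ : myA mβ = β * mβ := by
    have := hgmβ; simp only [hg_def] at this; linarith
  have htanh1 : mβ = Real.tanh (β * mβ) := by
    rw [← hAmβ]; exact (tanh_myA hmβIoo).symm
  have htanh2 : -mβ = Real.tanh (β * -mβ) := by
    rw [show β * -mβ = -(β * mβ) by ring, ← hAmβ, ← myA_neg hmβIoo]
    exact (tanh_myA hnegIoo).symm
  -- set equality
  have hset : {m ∈ Set.Ioo (-1 : ℝ) 1 | m = Real.tanh (β * m)} = {0, mβ, -mβ} := by
    ext m
    simp only [Set.mem_setOf_eq, Set.mem_insert_iff, Set.mem_singleton_iff]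
    constructor
    · rintro ⟨hmI, heq⟩
      have hA : myA m = β * m := by
        conv_lhs => rw [heq]
        exact myA_tanh _
      have hgm : g m = 0 := by simp [hg_def, hA]
      rcases lt_trichotomy m 0 with h | h | h
      · right; right
        have hnI : -m ∈ Ioo (0:ℝ) 1 := ⟨by linarith, by linarith [hmI.1]⟩
        have : g (-m) = 0 := by
          simp only [hg_def]
          rw [myA_neg hmI, hA]
          ring
        have := huniq (-m) hnI this
        linarith
      · left; exact h
      · right; left
        exact huniq m ⟨h, hmI.2⟩ hgm
    · rintro (rfl | rfl | rfl)
      · exact ⟨⟨by norm_num, by norm_num⟩, by simp [Real.tanh_zero]⟩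
      · exact ⟨hmβIoo, htanh1⟩
      · exact ⟨hnegIoo, htanh2⟩
  -- the free energy
  set F : ℝ → ℝ := fun x => -(latticeEntropy x) / β - x ^ 2 / 2 with hF_def
  have hF' : ∀ m ∈ Ioo (-1:ℝ) 1, HasDerivAt F (g m / β) m := fun m hm =>
    hasDerivAt_F β hβ0 hm
  have hIccsub2 : Icc (0:ℝ) mβ ⊆ Ioo (-1:ℝ) 1 :=
    fun x hx => ⟨by linarith [hx.1], by linarith [hx.2]⟩
  have hIcosub2 : Ico mβ (1:ℝ) ⊆ Ioo (-1:ℝ) 1 := fun x hx => ⟨by linarith [hx.1], hx.2⟩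
  have hFanti : StrictAntiOn F (Icc 0 mβ) := by
    apply strictAntiOn_of_deriv_neg (convex_Icc _ _)
    · exact fun x hx => (hF' x (hIccsub2 hx)).continuousAt.continuousWithinAt
    · intro x hx
      rw [interior_Icc] at hx
      rw [(hF' x (hIccsub2 ⟨hx.1.le, hx.2.le⟩)).deriv]
      exact div_neg_of_neg_of_pos (hsgn_neg x hx) hβ0
  have hFmono : StrictMonoOn F (Ico mβ 1) := by
    apply strictMonoOn_of_deriv_pos (convex_Ico _ _)
    · exact fun x hx => (hF' x (hIcosub2 hx)).continuousAt.continuousWithinAt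
    · intro x hx
      rw [interior_Ico] at hx
      rw [(hF' x (hIcosub2 ⟨hx.1.le, hx.2⟩)).deriv]
      exact div_pos (hsgn_pos x hx) hβ0
  have hFeven : ∀ m : ℝ, F (-m) = F m := by
    intro m
    have hsq : (-m) ^ 2 = m ^ 2 := by ring
    simp only [hF_def, latticeEntropy_even, hsq]
  -- key: F mβ ≤ F m, equality iff |m| = mβ
  have hkey : ∀ m ∈ Ioo (-1:ℝ) 1, F mβ ≤ F m ∧ (F m = F mβ → m = mβ ∨ m = -mβ) := by
    intro m hm
    have habs : F m = F |m| := by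
      rcases abs_cases m with ⟨h, _⟩ | ⟨h, _⟩
      · rw [h]
      · rw [h, hFeven]
    have hab0 : (0:ℝ) ≤ |m| := abs_nonneg m
    have hab1 : |m| < 1 := abs_lt.2 hm
    have main : F mβ ≤ F |m| ∧ (F |m| = F mβ → |m| = mβ) := by
      rcases lt_trichotomy |m| mβ with h | h | h
      · have := hFanti ⟨hab0, h.le⟩ ⟨hmβ0.le, le_refl _⟩ h
        exact ⟨this.le, fun he => absurd he this.ne'⟩
      · exact ⟨le_of_eq (by rw [h]), fun _ => h⟩
      · have := hFmono ⟨le_refl _, hmβ1⟩ ⟨h.le, hab1⟩ h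
        exact ⟨this.le, fun he => absurd he.symm this.ne⟩
    refine ⟨habs ▸ main.1, fun he => ?_⟩
    have := main.2 (by rw [← habs, he])
    rcases abs_eq hmβ0.le |>.1 this with h | h
    · exact Or.inl h
    · exact Or.inr h
  refine ⟨mβ, hmβ0, hmβ1, hset, fun m hm => (hkey m hm).1, fun m hm => (hkey m hm).2⟩
end

section
/- Let d ≥ 2, and for a Borel set E ⊆ ℝ^d of finite measure define the Fraenkel asymmetry A(E) = inf{|E Δ B(r,x)|/|E| : x ∈ ℝ^d}, where B(r,x) is the ball of radius r centered at x with (σ_d/d)r^d = |E|. Suppose m : ℝ^d → ℝ is measurable, h₋ < h₊, and the superlevel sets E_h = {x : m(x) ≥ h} satisfy: (i) E_k ⊆ E_h for k > h, and (ii) the volume of E_{h₊} outside every ball of radius ρ is at least η|E_{h₊}|, for some ρ, η > 0. If additionally for each h ∈ [h₋, h₊] the radius r_h of the ball of the same volume as E_h satisfies r_h ≤ ρ, then A(E_h) ≥ η·|E_{h₊}|/|E_h| for all h ∈ [h₋, h₊]. -/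
open MeasureTheory Metric

/-- The radius of the ball with the same volume as `E`. -/
noncomputable def equivRadius (d : ℕ) (E : Set (EuclideanSpace ℝ (Fin d))) : ℝ :=
  ((volume E).toReal / (volume (ball (0 : EuclideanSpace ℝ (Fin d)) 1)).toReal) ^ (1 / (d : ℝ))

/-- Fraenkel asymmetry of a set `E`. -/
noncomputable def fraenkel (d : ℕ) (E : Set (EuclideanSpace ℝ (Fin d))) : ℝ :=
  sInf {v : ℝ | ∃ x : EuclideanSpace ℝ (Fin d),
    v = (volume (symmDiff E (ball x (equivRadius d E)))).toReal / (volume E).toReal}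

/-- Nestedness of superlevel sets transfers an asymmetry lower bound on the droplet core
`E_{h₊}` to all intermediate level sets. -/
theorem stmt18 (d : ℕ) (hd : 2 ≤ d)
    (m : EuclideanSpace ℝ (Fin d) → ℝ) (hm : Measurable m)
    (hminus hplus ρ η : ℝ) (hh : hminus < hplus) (hρ : 0 < ρ) (hη : 0 < η)
    (hfin : ∀ h ∈ Set.Icc hminus hplus,
      volume {x | h ≤ m x} < ⊤)
    (hpos : 0 < volume {x | hplus ≤ m x})
    (hout : ∀ x : EuclideanSpace ℝ (Fin d),
      ENNReal.ofReal η * volume {y | hplus ≤ m y} ≤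
        volume ({y | hplus ≤ m y} \ ball x ρ))
    (hrad : ∀ h ∈ Set.Icc hminus hplus, equivRadius d {x | h ≤ m x} ≤ ρ) :
    ∀ h ∈ Set.Icc hminus hplus,
      η * (volume {x | hplus ≤ m x}).toReal / (volume {x | h ≤ m x}).toReal ≤
        fraenkel d {x | h ≤ m x} := by
  intro h hhIcc
  set Eh : Set (EuclideanSpace ℝ (Fin d)) := {x | h ≤ m x} with hEh
  set Ep : Set (EuclideanSpace ℝ (Fin d)) := {x | hplus ≤ m x} with hEp
  have hsub : Ep ⊆ Eh := fun x hx => le_trans hhIcc.2 hx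
  have hEhfin : volume Eh < ⊤ := hfin h hhIcc
  have hEppos : 0 < (volume Ep).toReal := by
    have hEpfin : volume Ep < ⊤ := lt_of_le_of_lt (measure_mono hsub) hEhfin
    exact ENNReal.toReal_pos hpos.ne' hEpfin.ne
  have hEhpos : 0 < (volume Eh).toReal :=
    ENNReal.toReal_pos (lt_of_lt_of_le hpos (measure_mono hsub)).ne' hEhfin.ne
  apply le_csInf
  · exact ⟨_, 0, rfl⟩
  · rintro v ⟨x, rfl⟩
    set r := equivRadius d Eh with hr
    have hrρ : r ≤ ρ := hrad h hhIcc
    have hsd : Ep \ ball x ρ ⊆ symmDiff Eh (ball x r) := by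
      intro y hy
      refine Or.inl ⟨hsub hy.1, fun hyb => hy.2 ?_⟩
      exact ball_subset_ball hrρ hyb
    have hfinsd : volume (symmDiff Eh (ball x r)) < ⊤ := by
      refine lt_of_le_of_lt (measure_mono (Set.symmDiff_subset_union)) ?_
      exact lt_of_le_of_lt (measure_union_le _ _)
        (ENNReal.add_lt_top.mpr ⟨hEhfin, measure_ball_lt_top⟩)
    have key : ENNReal.ofReal η * volume Ep ≤ volume (symmDiff Eh (ball x r)) :=
      le_trans (hout x) (measure_mono hsd)
    have key' : η * (volume Ep).toReal ≤ (volume (symmDiff Eh (ball x r))).toReal := by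
      have := ENNReal.toReal_mono hfinsd.ne key
      rwa [ENNReal.toReal_mul, ENNReal.toReal_ofReal hη.le] at this
    exact div_le_div_of_nonneg_right key' hEhpos.le
end

section
/- Let C > 0, d ≥ 2 an integer, and let Φ(η) = η^{1−1/d} + C(1−η)² for η ∈ [0,1], with global minimum value attained at η_c ∈ [0,1]. Then there exists φ₀ > 0 (depending on C and d) such that Φ(η) − Φ(η_c) ≥ φ₀ (η − η_c)² for all η ∈ [0,1], provided Φ has a unique global minimizer, i.e., C ≠ C⋆ = (1/d)((d+1)/2)^{(d+1)/d}. -/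
open Set Real

namespace Stmt19

noncomputable def f (p C η : ℝ) : ℝ := η ^ p + C * (1 - η) ^ 2
noncomputable def W (p C η : ℝ) : ℝ := p * η ^ (p - 1) - 2 * C * (1 - η)
noncomputable def Wd (p C η : ℝ) : ℝ := p * (p - 1) * η ^ (p - 2) + 2 * C

variable {p C : ℝ}

theorem hasDerivAt_f {x : ℝ} (hx : x ≠ 0) : HasDerivAt (f p C) (W p C x) x := by
  have h1 : HasDerivAt (fun η : ℝ => η ^ p) (p * x ^ (p - 1)) x :=
    Real.hasDerivAt_rpow_const (Or.inl hx)
  have h2 : HasDerivAt (fun η : ℝ => (1 - η) ^ 2) (((2 : ℕ) : ℝ) * (1 - x) ^ (2 - 1) * (-1)) x :=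
    ((hasDerivAt_id x).const_sub 1).pow 2
  have h := h1.add (h2.const_mul C)
  refine h.congr_deriv ?_
  unfold W; push_cast; ring

theorem hasDerivAt_W {x : ℝ} (hx : x ≠ 0) : HasDerivAt (W p C) (Wd p C x) x := by
  have h1 : HasDerivAt (fun η : ℝ => η ^ (p - 1)) ((p - 1) * x ^ (p - 1 - 1)) x :=
    Real.hasDerivAt_rpow_const (Or.inl hx)
  have h2 : HasDerivAt (fun η : ℝ => 1 - η) (-1) x := (hasDerivAt_id x).const_sub 1
  have h := (h1.const_mul p).sub ((h2.const_mul (2 * C)))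
  refine h.congr_deriv ?_
  unfold Wd
  have : p - 1 - 1 = p - 2 := by ring
  rw [this]; ring

theorem continuousOn_f (hp0 : 0 < p) (s : Set ℝ) : ContinuousOn (f p C) s := by
  intro x _
  have h1 : ContinuousAt (fun η : ℝ => η ^ p) x :=
    Real.continuousAt_rpow_const x p (Or.inr hp0.le)
  have h2 : ContinuousAt (fun η : ℝ => C * (1 - η) ^ 2) x := by fun_prop
  exact ((h1.add h2).congr (by filter_upwards with y; rfl)).continuousWithinAt

theorem Wd_lt (hp0 : 0 < p) (hp1 : p < 1) (hC : 0 < C) {s t : ℝ} (hs : 0 < s) (hst : s < t) :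
    Wd p C s < Wd p C t := by
  have h : t ^ (p - 2) < s ^ (p - 2) :=
    Real.rpow_lt_rpow_of_neg hs hst (by linarith)
  have hneg : 0 < p * (1 - p) := mul_pos hp0 (by linarith)
  unfold Wd
  nlinarith [h, hneg]

theorem min_interior_W_eq_zero {x : ℝ} (hmin : IsMinOn (f p C) (Icc 0 1) x)
    (hx : x ∈ Ioo (0:ℝ) 1) : W p C x = 0 :=
  (hmin.isLocalMin (Icc_mem_nhds hx.1 hx.2)).hasDerivAt_eq_zero (hasDerivAt_f hx.1.ne')

theorem not_min_one (hp0 : 0 < p) (hp1 : p < 1) (hC : 0 < C) :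
    ¬ IsMinOn (f p C) (Icc 0 1) 1 := by
  intro h
  set t₁ : ℝ := max (1/2) (1 - p / (4 * C)) with ht₁def
  have h4C : (0:ℝ) < 4 * C := by linarith
  have hpos : 0 < p / (4 * C) := div_pos hp0 h4C
  have ht₁1 : t₁ < 1 := max_lt (by norm_num) (by linarith)
  have ht₁0 : (0:ℝ) < t₁ := lt_of_lt_of_le (by norm_num) (le_max_left _ _)
  have hWpos : ∀ x ∈ Ioo t₁ 1, 0 < W p C x := by
    intro x hx
    have hx0 : (1/2 : ℝ) < x := lt_of_le_of_lt (le_max_left _ _) hx.1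
    have hx1 : x < 1 := hx.2
    have hxp : 1 ≤ x ^ (p - 1) :=
      Real.one_le_rpow_of_pos_of_le_one_of_nonpos (by linarith) hx1.le (by linarith)
    have hxt : 1 - p / (4 * C) < x := lt_of_le_of_lt (le_max_right _ _) hx.1
    have : 2 * C * (1 - x) < 2 * C * (p / (4 * C)) := by
      apply mul_lt_mul_of_pos_left _ (by linarith : (0:ℝ) < 2 * C)
      linarith
    have h2 : 2 * C * (p / (4 * C)) = p / 2 := by field_simp; ring
    unfold W
    nlinarith [hxp, hp0]
  have hmono : StrictMonoOn (f p C) (Icc t₁ 1) := by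
    apply strictMonoOn_of_hasDerivWithinAt_pos (convex_Icc _ _)
      (continuousOn_f hp0 _) (f' := W p C) ?_ ?_
    · intro x hx
      rw [interior_Icc] at hx
      exact (hasDerivAt_f (by linarith [ht₁0, hx.1] : x ≠ 0)).hasDerivWithinAt
    · intro x hx
      rw [interior_Icc] at hx
      exact hWpos x hx
  have hlt : f p C t₁ < f p C 1 :=
    hmono ⟨le_rfl, ht₁1.le⟩ ⟨ht₁1.le, le_rfl⟩ ht₁1
  exact absurd (isMinOn_iff.1 h t₁ ⟨ht₁0.le, ht₁1.le⟩) (not_le.2 hlt)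

theorem strict_min (hp0 : 0 < p) (hp1 : p < 1) (hC : 0 < C)
    (Htie : ¬ ∃ B ∈ Ioo (0:ℝ) 1, W p C B = 0 ∧ f p C B = f p C 0)
    {ηc : ℝ} (hηc : ηc ∈ Icc (0:ℝ) 1) (hmin : IsMinOn (f p C) (Icc 0 1) ηc)
    {η : ℝ} (hη : η ∈ Icc (0:ℝ) 1) (hne : η ≠ ηc) : f p C ηc < f p C η := by
  rcases lt_or_eq_of_le (isMinOn_iff.1 hmin η hη) with h | heq
  · exact h
  exfalso
  -- η is also a global minimizer
  have hmin' : IsMinOn (f p C) (Icc 0 1) η := by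
    apply isMinOn_iff.2
    intro y hy
    calc f p C η = f p C ηc := heq.symm
    _ ≤ f p C y := isMinOn_iff.1 hmin y hy
  set A := min η ηc with hA
  set B := max η ηc with hB
  have hAB : A < B := min_lt_max.2 hne
  have hminA : IsMinOn (f p C) (Icc 0 1) A := by
    rcases min_choice η ηc with h | h <;> rw [hA, h] <;> assumption
  have hminB : IsMinOn (f p C) (Icc 0 1) B := by
    rcases max_choice η ηc with h | h <;> rw [hB, h] <;> assumption
  have hA0 : 0 ≤ A := le_min hη.1 hηc.1
  have hB1 : B < 1 := by
    rcases lt_or_eq_of_le (max_le hη.2 hηc.2) with h | h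
    · exact h
    · exact absurd (h ▸ hminB) (not_min_one hp0 hp1 hC)
  have hB0 : 0 < B := lt_of_le_of_lt hA0 hAB
  have hfAB : f p C A = f p C B := by
    rcases min_choice η ηc with h | h <;> rcases max_choice η ηc with h' | h' <;>
      rw [hA, h, hB, h'] <;> simp [heq]
  have hWB : W p C B = 0 := min_interior_W_eq_zero hminB ⟨hB0, hB1⟩
  rcases eq_or_lt_of_le hA0 with hA0' | hA0'
  · exact Htie ⟨B, ⟨hB0, hB1⟩, hWB, by rw [← hfAB, ← hA0']⟩
  · have hWA : W p C A = 0 := min_interior_W_eq_zero hminA ⟨hA0', lt_trans hAB hB1⟩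
    obtain ⟨c, hc, hWc⟩ := exists_hasDerivAt_eq_zero (f' := W p C) hAB
      (continuousOn_f hp0 _) hfAB
      (fun x hx => hasDerivAt_f (by linarith [hx.1] : x ≠ 0))
    have hcW : ContinuousOn (W p C) (Icc A B) := fun x hx =>
      (hasDerivAt_W (by linarith [hx.1] : x ≠ 0)).continuousAt.continuousWithinAt
    obtain ⟨u, hu, hu0⟩ := exists_hasDerivAt_eq_zero (f' := Wd p C) hc.1
      (hcW.mono (Icc_subset_Icc le_rfl hc.2.le)) (by rw [hWA, hWc])
      (fun x hx => hasDerivAt_W (by linarith [hx.1] : x ≠ 0))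
    obtain ⟨v, hv, hv0⟩ := exists_hasDerivAt_eq_zero (f' := Wd p C) hc.2
      (hcW.mono (Icc_subset_Icc hc.1.le le_rfl)) (by rw [hWc, hWB])
      (fun x hx => hasDerivAt_W (by linarith [hA0', hc.1, hx.1] : x ≠ 0))
    have := Wd_lt hp0 hp1 hC (by linarith [hu.1] : 0 < u) (lt_trans hu.2 hv.1)
    rw [hu0, hv0] at this
    exact lt_irrefl 0 this

/-- Quadratic growth to the right of an interior critical point. -/
theorem right_quad (hp0 : 0 < p) (hp1 : p < 1) (hC : 0 < C) {ηc a : ℝ}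
    (hηc : ηc ∈ Ioo (0:ℝ) 1) (hW : W p C ηc = 0) (ha : Wd p C ηc = 2 * a) :
    ∀ η ∈ Icc ηc 1, a * (η - ηc) ^ 2 ≤ f p C η - f p C ηc := by
  have hcont : ∀ x ∈ Icc ηc 1, 0 < x := fun x hx => lt_of_lt_of_le hηc.1 hx.1
  -- U1 = derivative of u, is nonneg on [ηc,1]
  set U1 : ℝ → ℝ := fun t => W p C t - 2 * a * (t - ηc) with hU1
  have hU1deriv : ∀ x ∈ Icc ηc 1, x ≠ ηc ∨ True → HasDerivAt U1 (Wd p C x - 2 * a) x := by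
    intro x hx _
    have h2 : HasDerivAt (fun t : ℝ => 2 * a * (t - ηc)) (2 * a * 1) x :=
      ((hasDerivAt_id x).sub_const ηc).const_mul (2 * a)
    have h : HasDerivAt (fun t => W p C t - 2 * a * (t - ηc)) (Wd p C x - 2 * a * 1) x :=
      (hasDerivAt_W (hcont x hx).ne').sub h2
    convert h using 2; ring
  have hU1mono : MonotoneOn U1 (Icc ηc 1) := by
    apply monotoneOn_of_hasDerivWithinAt_nonneg (convex_Icc _ _)
      (f' := fun x => Wd p C x - 2 * a)
    · intro x hx
      exact (hU1deriv x hx (Or.inr trivial)).continuousAt.continuousWithinAt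
    · intro x hx
      rw [interior_Icc] at hx
      exact (hU1deriv x ⟨hx.1.le, hx.2.le⟩ (Or.inr trivial)).hasDerivWithinAt
    · intro x hx
      rw [interior_Icc] at hx
      have := Wd_lt hp0 hp1 hC hηc.1 hx.1
      rw [ha] at this
      linarith
  have hU1nonneg : ∀ x ∈ Icc ηc 1, 0 ≤ U1 x := by
    intro x hx
    have h0 : U1 ηc = 0 := by simp [hU1, hW]
    have := hU1mono ⟨le_rfl, hηc.2.le⟩ hx hx.1
    rw [h0] at this; exact this
  -- u = f - a(·-ηc)²  is monotone on [ηc,1]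
  set u : ℝ → ℝ := fun t => f p C t - a * (t - ηc) ^ 2 with hu
  have hudriv : ∀ x ∈ Icc ηc 1, HasDerivAt u (U1 x) x := by
    intro x hx
    have h2 : HasDerivAt (fun t : ℝ => (t - ηc) ^ 2)
        (((2:ℕ):ℝ) * (x - ηc) ^ (2-1) * 1) x := ((hasDerivAt_id x).sub_const ηc).pow 2
    have h : HasDerivAt (fun t => f p C t - a * (t - ηc) ^ 2)
        (W p C x - a * (((2:ℕ):ℝ) * (x - ηc) ^ (2-1) * 1)) x :=
      (hasDerivAt_f (hcont x hx).ne').sub (h2.const_mul a)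
    convert h using 1
    simp [hU1]; push_cast; ring
  have humono : MonotoneOn u (Icc ηc 1) := by
    apply monotoneOn_of_hasDerivWithinAt_nonneg (convex_Icc _ _) (f' := U1)
    · intro x hx; exact (hudriv x hx).continuousAt.continuousWithinAt
    · intro x hx; rw [interior_Icc] at hx
      exact (hudriv x ⟨hx.1.le, hx.2.le⟩).hasDerivWithinAt
    · intro x hx; rw [interior_Icc] at hx
      exact hU1nonneg x ⟨hx.1.le, hx.2.le⟩
  intro η hη
  have := humono ⟨le_rfl, hηc.2.le⟩ hη hη.1
  simp only [hu] at this
  nlinarith [this]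

/-- Quadratic growth to the left of an interior critical point. -/
theorem left_quad (hp0 : 0 < p) (hp1 : p < 1) (hC : 0 < C) {ηc a t₀ : ℝ}
    (hηc : ηc ∈ Ioo (0:ℝ) 1) (hW : W p C ηc = 0) (ht₀0 : 0 < t₀) (ht₀c : t₀ < ηc)
    (hWd : ∀ t ∈ Icc t₀ ηc, a ≤ Wd p C t) :
    ∀ η ∈ Icc t₀ ηc, a / 2 * (η - ηc) ^ 2 ≤ f p C η - f p C ηc := by
  have hcont : ∀ x ∈ Icc t₀ ηc, 0 < x := fun x hx => lt_of_lt_of_le ht₀0 hx.1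
  set V1 : ℝ → ℝ := fun t => W p C t + a * (ηc - t) with hV1
  have hV1deriv : ∀ x ∈ Icc t₀ ηc, HasDerivAt V1 (Wd p C x - a) x := by
    intro x hx
    have h2 : HasDerivAt (fun t : ℝ => a * (ηc - t)) (a * (-1)) x :=
      ((hasDerivAt_id x).const_sub ηc).const_mul a
    have h : HasDerivAt (fun t => W p C t + a * (ηc - t)) (Wd p C x + a * (-1)) x :=
      (hasDerivAt_W (hcont x hx).ne').add h2
    convert h using 1; ring
  have hV1mono : MonotoneOn V1 (Icc t₀ ηc) := by
    apply monotoneOn_of_hasDerivWithinAt_nonneg (convex_Icc _ _)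
      (f' := fun x => Wd p C x - a)
    · intro x hx; exact (hV1deriv x hx).continuousAt.continuousWithinAt
    · intro x hx; rw [interior_Icc] at hx
      exact (hV1deriv x ⟨hx.1.le, hx.2.le⟩).hasDerivWithinAt
    · intro x hx; rw [interior_Icc] at hx
      have := hWd x ⟨hx.1.le, hx.2.le⟩; linarith
  have hV1nonpos : ∀ x ∈ Icc t₀ ηc, V1 x ≤ 0 := by
    intro x hx
    have h0 : V1 ηc = 0 := by simp [hV1, hW]
    have := hV1mono hx ⟨ht₀c.le, le_rfl⟩ hx.2
    rw [h0] at this; exact this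
  set v : ℝ → ℝ := fun t => f p C t - a / 2 * (ηc - t) ^ 2 with hv
  have hvderiv : ∀ x ∈ Icc t₀ ηc, HasDerivAt v (V1 x) x := by
    intro x hx
    have h2 : HasDerivAt (fun t : ℝ => (ηc - t) ^ 2)
        (((2:ℕ):ℝ) * (ηc - x) ^ (2-1) * (-1)) x := ((hasDerivAt_id x).const_sub ηc).pow 2
    have h : HasDerivAt (fun t => f p C t - a / 2 * (ηc - t) ^ 2)
        (W p C x - a / 2 * (((2:ℕ):ℝ) * (ηc - x) ^ (2-1) * (-1))) x :=
      (hasDerivAt_f (hcont x hx).ne').sub (h2.const_mul (a / 2))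
    convert h using 1
    simp [hV1]; push_cast; ring
  have hvanti : AntitoneOn v (Icc t₀ ηc) := by
    apply antitoneOn_of_hasDerivWithinAt_nonpos (convex_Icc _ _) (f' := V1)
    · intro x hx; exact (hvderiv x hx).continuousAt.continuousWithinAt
    · intro x hx; rw [interior_Icc] at hx
      exact (hvderiv x ⟨hx.1.le, hx.2.le⟩).hasDerivWithinAt
    · intro x hx; rw [interior_Icc] at hx
      exact hV1nonpos x ⟨hx.1.le, hx.2.le⟩
  intro η hη
  have := hvanti hη ⟨ht₀c.le, le_rfl⟩ hη.2
  simp only [hv] at this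
  nlinarith [this]

theorem tie_value {C : ℝ} (hC : 0 < C) (d : ℕ) (hd : 2 ≤ d) {B : ℝ} (hB : B ∈ Ioo (0:ℝ) 1)
    (h1 : W (1 - 1/(d:ℝ)) C B = 0) (h2 : f (1 - 1/(d:ℝ)) C B = f (1 - 1/(d:ℝ)) C 0) :
    C = (1 / (d : ℝ)) * (((d : ℝ) + 1) / 2) ^ (((d : ℝ) + 1) / d) := by
  have hd2 : (2:ℝ) ≤ (d:ℝ) := by exact_mod_cast hd
  have hd0 : (0:ℝ) < (d:ℝ) := by linarith
  set p : ℝ := 1 - 1/(d:ℝ) with hp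
  have hp0 : 0 < p := by
    have : 1/(d:ℝ) ≤ 1/2 := by
      rw [div_le_div_iff₀ hd0 (by norm_num)]; linarith
    simp only [hp]; linarith
  have hf0 : f p C 0 = C := by
    unfold f
    rw [Real.zero_rpow hp0.ne']; ring
  have hsplit : B ^ p = B ^ (p - 1) * B := by
    have h := Real.rpow_add hB.1 (p - 1) 1
    rw [Real.rpow_one] at h
    calc B ^ p = B ^ (p - 1 + 1) := by norm_num
    _ = B ^ (p - 1) * B := h
  set X : ℝ := B ^ (p - 1) with hX
  have hXpos : 0 < X := Real.rpow_pos_of_pos hB.1 _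
  have hB0 : (0:ℝ) < B := hB.1
  have hB1 : B < 1 := hB.2
  -- from h2 : X = C * (2 - B)
  have e2 : X = C * (2 - B) := by
    have h2' : X * B + C * (1 - B) ^ 2 = C := by
      rw [hf0] at h2
      rw [← hsplit] at *
      unfold f at h2
      linarith [h2]
    have : X * B = C * (2 - B) * B := by nlinarith [h2']
    exact mul_right_cancel₀ hB0.ne' this
  -- from h1 : p * (2 - B) = 2 * (1 - B)
  have e1 : p * (2 - B) = 2 * (1 - B) := by
    have h1' : p * X = 2 * C * (1 - B) := by
      unfold W at h1; rw [← hX] at h1; linarith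
    rw [e2] at h1'
    have : C * (p * (2 - B)) = C * (2 * (1 - B)) := by ring_nf; ring_nf at h1'; linarith
    exact mul_left_cancel₀ hC.ne' this
  -- solve for B
  have hBval : B = 2 / ((d:ℝ) + 1) := by
    simp only [hp] at e1
    have hne : (d:ℝ) ≠ 0 := hd0.ne'
    field_simp at e1 ⊢
    nlinarith [e1]
  -- compute X
  have hpm1 : p - 1 = -(1/(d:ℝ)) := by simp [hp]
  have hXval : X = (((d:ℝ) + 1) / 2) ^ (1/(d:ℝ)) := by
    rw [hX, hpm1, hBval]
    rw [Real.rpow_neg (by positivity)]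
    rw [show (2:ℝ) / ((d:ℝ)+1) = (((d:ℝ)+1)/2)⁻¹ by field_simp]
    rw [Real.inv_rpow (by positivity), inv_inv]
  -- final computation
  have h2B : 2 - B = 2 * (d:ℝ) / ((d:ℝ) + 1) := by
    rw [hBval]; field_simp; ring
  have hCval : C = (((d:ℝ) + 1) / 2) ^ (1/(d:ℝ)) * (((d:ℝ) + 1) / (2 * (d:ℝ))) := by
    rw [← hXval]
    rw [e2, h2B]
    field_simp
  rw [hCval]
  have hsum : ((d:ℝ) + 1) / (d:ℝ) = 1/(d:ℝ) + 1 := by field_simp; ring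
  rw [hsum, Real.rpow_add (by positivity), Real.rpow_one]
  field_simp

end Stmt19

open Stmt19 in
set_option maxHeartbeats 2000000 in
/-- Quadratic stability of the reduced free energy `Φ(η) = η^{1−1/d} + C(1−η)²` around its
global minimizer on `[0,1]`, provided `C ≠ C⋆` (so the minimizer is unique). -/
theorem stmt19 (d : ℕ) (hd : 2 ≤ d) (C : ℝ) (hC : 0 < C)
    (hCne : C ≠ (1 / (d : ℝ)) * (((d : ℝ) + 1) / 2) ^ (((d : ℝ) + 1) / d))
    (ηc : ℝ) (hηc : ηc ∈ Set.Icc (0 : ℝ) 1)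
    (hmin : ∀ η ∈ Set.Icc (0 : ℝ) 1,
      ηc ^ ((1 : ℝ) - 1 / d) + C * (1 - ηc) ^ 2 ≤ η ^ ((1 : ℝ) - 1 / d) + C * (1 - η) ^ 2) :
    ∃ φ₀ > 0, ∀ η ∈ Set.Icc (0 : ℝ) 1,
      (η ^ ((1 : ℝ) - 1 / d) + C * (1 - η) ^ 2) -
          (ηc ^ ((1 : ℝ) - 1 / d) + C * (1 - ηc) ^ 2) ≥ φ₀ * (η - ηc) ^ 2 := by
  have hd2 : (2:ℝ) ≤ (d:ℝ) := by exact_mod_cast hd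
  have hd0 : (0:ℝ) < (d:ℝ) := by linarith
  set p : ℝ := 1 - 1/(d:ℝ) with hpdef
  have hdinv : 1/(d:ℝ) ≤ 1/2 := by
    rw [div_le_div_iff₀ hd0 (by norm_num)]; linarith
  have hdinv0 : 0 < 1/(d:ℝ) := by positivity
  have hp0 : 0 < p := by simp only [hpdef]; linarith
  have hp1 : p < 1 := by simp only [hpdef]; linarith
  have Hmin : IsMinOn (f p C) (Icc 0 1) ηc := isMinOn_iff.2 (fun x hx => hmin x hx)
  have Htie : ¬ ∃ B ∈ Ioo (0:ℝ) 1, W p C B = 0 ∧ f p C B = f p C 0 := by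
    rintro ⟨B, hB, h1, h2⟩
    exact hCne (tie_value hC d hd hB h1 h2)
  have hstrict : ∀ η ∈ Icc (0:ℝ) 1, η ≠ ηc → f p C ηc < f p C η :=
    fun η hη hne => strict_min hp0 hp1 hC Htie hηc Hmin hη hne
  have hηc1 : ηc ≠ 1 := by
    rintro rfl; exact not_min_one hp0 hp1 hC Hmin
  have hsq : ∀ η ∈ Icc (0:ℝ) 1, (η - ηc)^2 ≤ 1 := by
    intro η hη; nlinarith [hη.1, hη.2, hηc.1, hηc.2]
  rcases eq_or_lt_of_le hηc.1 with h0 | h0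
  · -- ηc = 0
    have h0' : ηc = 0 := h0.symm
    subst h0'
    set δ : ℝ := (4*C) ^ (-(1/(1-p))) with hδdef
    have hδ0 : 0 < δ := Real.rpow_pos_of_pos (by linarith) _
    clear_value δ
    have hnear : ∀ η ∈ Icc (0:ℝ) 1, η ≤ δ → 2*C*η^2 ≤ f p C η - f p C 0 := by
      intro η hη hle
      have hf0 : f p C 0 = C := by
        unfold f; rw [Real.zero_rpow hp0.ne']; ring
      rcases eq_or_lt_of_le hη.1 with h | hpos
      · rw [← h, hf0]; simp [f, Real.zero_rpow hp0.ne']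
      · have h1p : (0:ℝ) < 1 - p := by linarith
        have hb1 : η ^ (1-p) ≤ δ ^ (1-p) := Real.rpow_le_rpow hη.1 hle h1p.le
        have hb2 : δ ^ (1-p) = (4*C)⁻¹ := by
          rw [hδdef, ← Real.rpow_mul (by linarith : (0:ℝ) ≤ 4*C)]
          rw [show -(1/(1-p)) * (1-p) = -1 by field_simp]
          exact Real.rpow_neg_one _
        have hb3 : 4*C ≤ η ^ (p-1) := by
          have hηpow : 0 < η ^ (1-p) := Real.rpow_pos_of_pos hpos _
          have h4 : η ^ (1-p) ≤ (4*C)⁻¹ := hb2 ▸ hb1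
          have h5 : ((4*C)⁻¹)⁻¹ ≤ (η ^ (1-p))⁻¹ := by
            apply inv_anti₀ hηpow h4
          rw [inv_inv] at h5
          rw [show p - 1 = -(1-p) by ring, Real.rpow_neg hη.1]
          exact h5
        have hmul : η ^ p = η ^ (p-1) * η := by
          have h := Real.rpow_add hpos (p-1) 1
          rw [Real.rpow_one] at h
          calc η ^ p = η ^ (p - 1 + 1) := by norm_num
          _ = η ^ (p-1) * η := h
        have hηp : 4*C*η ≤ η ^ p := by
          rw [hmul]
          exact mul_le_mul_of_nonneg_right hb3 hpos.le |>.trans_eq rfl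
        have hη2 : η^2 ≤ η := by nlinarith [hη.2, hpos]
        rw [hf0]
        unfold f
        nlinarith [hηp, mul_le_mul_of_nonneg_left hη2 hC.le]
    obtain ⟨z, hzK, hzmin⟩ := isCompact_Icc.exists_isMinOn
      (⟨1, min_le_right δ 1, le_rfl⟩ : (Icc (min δ 1) 1).Nonempty)
      (continuousOn_f hp0 _)
    have hz0 : 0 < z := lt_of_lt_of_le (lt_min hδ0 one_pos) hzK.1
    have hzIcc : z ∈ Icc (0:ℝ) 1 := ⟨hz0.le, hzK.2⟩
    have hm : 0 < f p C z - f p C 0 := by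
      have := hstrict z hzIcc hz0.ne'
      linarith
    set m : ℝ := f p C z - f p C 0 with hmdef
    clear_value m
    refine ⟨min (2*C) m, lt_min (by linarith) hm, ?_⟩
    intro η hη
    have hgoal : min (2*C) m * (η - 0)^2 ≤ f p C η - f p C 0 := by
      rcases le_total η δ with hcase | hcase
      · calc min (2*C) m * (η - 0)^2 ≤ 2*C * η^2 := by
              have : (0:ℝ) ≤ (η-0)^2 := sq_nonneg _
              simp only [sub_zero]
              exact mul_le_mul_of_nonneg_right (min_le_left _ _) (sq_nonneg _)
        _ ≤ f p C η - f p C 0 := hnear η hη hcase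
      · have hηK : η ∈ Icc (min δ 1) 1 := ⟨(min_le_left δ 1).trans hcase, hη.2⟩
        have h1 : f p C z ≤ f p C η := isMinOn_iff.1 hzmin η hηK
        calc min (2*C) m * (η - 0)^2 ≤ m * (η-0)^2 :=
              mul_le_mul_of_nonneg_right (min_le_right _ _) (sq_nonneg _)
        _ ≤ m * 1 := mul_le_mul_of_nonneg_left (hsq η hη) hm.le
        _ = m := mul_one m
        _ ≤ f p C η - f p C 0 := by rw [hmdef]; linarith
    exact hgoal
  · -- 0 < ηc
    have hc1 : ηc < 1 := lt_of_le_of_ne hηc.2 hηc1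
    have hWc : W p C ηc = 0 := min_interior_W_eq_zero Hmin ⟨h0, hc1⟩
    set K : ℝ := p*(1-p)*ηc^(p-2) with hKdef
    have hK : 0 < K := by
      have := Real.rpow_pos_of_pos h0 (p-2)
      have h1p : (0:ℝ) < 1 - p := by linarith
      positivity
    have hWdc : Wd p C ηc = 2*C - K := by unfold Wd; rw [hKdef]; ring
    have haK : K < 2*C := by
      by_contra hcon
      push_neg at hcon
      have hWdneg : ∀ x ∈ Ioo (ηc/2) ηc, Wd p C x < 0 := by
        intro x hx
        have := Wd_lt hp0 hp1 hC (by linarith [hx.1, h0] : 0 < x) hx.2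
        rw [hWdc] at this; linarith
      have hanti : StrictAntiOn (W p C) (Icc (ηc/2) ηc) := by
        apply strictAntiOn_of_hasDerivWithinAt_neg (convex_Icc _ _) (f' := Wd p C)
        · intro x hx
          exact (hasDerivAt_W (by linarith [hx.1, h0] : x ≠ 0)).continuousAt.continuousWithinAt
        · intro x hx; rw [interior_Icc] at hx
          exact (hasDerivAt_W (by nlinarith [hx.1, h0] : x ≠ 0)).hasDerivWithinAt
        · intro x hx; rw [interior_Icc] at hx
          exact hWdneg x hx
      have hWpos : ∀ x ∈ Ioo (ηc/2) ηc, 0 < W p C x := by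
        intro x hx
        have := hanti ⟨le_rfl.trans hx.1.le, hx.2.le⟩ ⟨by linarith [h0], le_rfl⟩ hx.2
        rw [hWc] at this; exact this
      have hmono : StrictMonoOn (f p C) (Icc (ηc/2) ηc) := by
        apply strictMonoOn_of_hasDerivWithinAt_pos (convex_Icc _ _) (continuousOn_f hp0 _)
          (f' := W p C)
        · intro x hx; rw [interior_Icc] at hx
          exact (hasDerivAt_f (by nlinarith [hx.1, h0] : x ≠ 0)).hasDerivWithinAt
        · intro x hx; rw [interior_Icc] at hx
          exact hWpos x hx
      have hlt : f p C (ηc/2) < f p C ηc :=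
        hmono ⟨le_rfl, by linarith⟩ ⟨by linarith, le_rfl⟩ (by linarith)
      have := isMinOn_iff.1 Hmin (ηc/2) ⟨by linarith, by linarith⟩
      linarith
    set a : ℝ := C - K/2 with hadef
    have ha : 0 < a := by rw [hadef]; linarith
    have hWd2a : Wd p C ηc = 2*a := by rw [hWdc, hadef]; ring
    clear_value K a
    set θ : ℝ := (2*K/(2*C+K)) ^ ((1:ℝ)/(2-p)) with hθdef
    have hbase0 : 0 < 2*K/(2*C+K) := div_pos (by linarith) (by linarith)
    have hbase1 : 2*K/(2*C+K) < 1 := by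
      rw [div_lt_one (by linarith)]; linarith
    have hθ0 : 0 < θ := Real.rpow_pos_of_pos hbase0 _
    have hθ1 : θ < 1 := Real.rpow_lt_one hbase0.le hbase1 (div_pos one_pos (by linarith))
    set t₀ : ℝ := ηc * θ with ht₀def
    have ht₀0 : 0 < t₀ := mul_pos h0 hθ0
    have ht₀c : t₀ < ηc := by
      rw [ht₀def]
      calc ηc * θ < ηc * 1 := by exact mul_lt_mul_of_pos_left hθ1 h0
      _ = ηc := mul_one ηc
    have hθpow : θ ^ (p-2) = (2*C+K)/(2*K) := by
      rw [hθdef, ← Real.rpow_mul hbase0.le]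
      rw [show (1:ℝ)/(2-p) * (p-2) = -1 from by
        rw [div_mul_eq_mul_div, one_mul, div_eq_iff (by linarith : (2:ℝ)-p ≠ 0)]; ring]
      rw [Real.rpow_neg_one]
      rw [inv_div]
    have hWdt₀ : Wd p C t₀ = a := by
      unfold Wd
      rw [ht₀def, Real.mul_rpow h0.le hθ0.le, hθpow]
      have hKeq : p*(p-1)*ηc^(p-2) = -K := by rw [hKdef]; ring
      have : p * (p-1) * (ηc^(p-2) * ((2*C+K)/(2*K))) = -K * ((2*C+K)/(2*K)) := by
        rw [← hKeq]; ring
      rw [this, hadef]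
      have hK0 : K ≠ 0 := hK.ne'
      field_simp
      ring
    clear_value θ t₀
    have hWdge : ∀ t ∈ Icc t₀ ηc, a ≤ Wd p C t := by
      intro t ht
      rcases eq_or_lt_of_le ht.1 with h | h
      · rw [← h, hWdt₀]
      · exact (hWdt₀ ▸ Wd_lt hp0 hp1 hC ht₀0 h).le
    have hleft := left_quad hp0 hp1 hC ⟨h0, hc1⟩ hWc ht₀0 ht₀c hWdge
    have hright := right_quad hp0 hp1 hC ⟨h0, hc1⟩ hWc hWd2a
    obtain ⟨z, hzK, hzmin⟩ := isCompact_Icc.exists_isMinOn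
      (⟨0, le_rfl, ht₀0.le⟩ : (Icc (0:ℝ) t₀).Nonempty)
      (continuousOn_f hp0 _)
    have hzIcc : z ∈ Icc (0:ℝ) 1 := ⟨hzK.1, hzK.2.trans (by linarith)⟩
    have hzne : z ≠ ηc := by
      intro h; rw [h] at hzK; linarith [hzK.2]
    have hm : 0 < f p C z - f p C ηc := by
      have := hstrict z hzIcc hzne; linarith
    set m : ℝ := f p C z - f p C ηc with hmdef
    clear_value m
    refine ⟨min (a/2) m, lt_min (by linarith) hm, ?_⟩
    intro η hη
    show f p C η - f p C ηc ≥ min (a/2) m * (η - ηc)^2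
    rcases le_total η t₀ with hcase | hcase
    · have hηK : η ∈ Icc (0:ℝ) t₀ := ⟨hη.1, hcase⟩
      have h1 : f p C z ≤ f p C η := isMinOn_iff.1 hzmin η hηK
      calc min (a/2) m * (η - ηc)^2 ≤ m * (η-ηc)^2 :=
            mul_le_mul_of_nonneg_right (min_le_right _ _) (sq_nonneg _)
      _ ≤ m * 1 := mul_le_mul_of_nonneg_left (hsq η hη) hm.le
      _ = m := mul_one m
      _ ≤ f p C η - f p C ηc := by rw [hmdef]; linarith
    · rcases le_total η ηc with hcase2 | hcase2
      · calc min (a/2) m * (η - ηc)^2 ≤ a/2 * (η-ηc)^2 :=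
              mul_le_mul_of_nonneg_right (min_le_left _ _) (sq_nonneg _)
        _ ≤ f p C η - f p C ηc := hleft η ⟨hcase, hcase2⟩
      · calc min (a/2) m * (η - ηc)^2 ≤ a * (η-ηc)^2 := by
              apply mul_le_mul_of_nonneg_right _ (sq_nonneg _)
              exact (min_le_left _ _).trans (by linarith)
        _ ≤ f p C η - f p C ηc := hright η ⟨hcase2, hη.2⟩
end
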